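/- Let K : ℝ² → ℝ be nonpositive and locally bounded, and for p ≥ 1 define α_p(K) = sup{α ∈ ℝ : ∫_{ℝ²} |K(x)|^p (1+|x|)^{2αp+2(p-1)} dx < ∞} (with sup ∅ = -∞). If 1 ≤ p < p₀ then α_p(K) ≥ α_{p₀}(K). -/

import Mathlib

open MeasureTheory Real Filter
noncomputable section
abbrev E2 : Type := EuclideanSpace ℝ (Fin 2)
/-- Classical Laplacian on ℝ². -/
def lap (u : E2 → ℝ) (x : E2) : ℝ :=
  ∑ i : Fin 2, fderiv ℝ (fun y => fderiv ℝ u y (EuclideanSpace.single i 1)) x (EuclideanSpace.single i 1)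
/-- The set of admissible exponents α in the definition of α_p(K). -/
def alphaSet (K : E2 → ℝ) (p : ℝ) : Set ℝ :=
  {α : ℝ | Integrable (fun x : E2 => |K x| ^ p * (1 + ‖x‖) ^ (2*α*p + 2*(p-1)))}
/-- α_p(K), with the convention sup ∅ = -∞ (⊥ in `EReal`). -/
def alphaP (K : E2 → ℝ) (p : ℝ) : EReal :=
  sSup ((fun a : ℝ => (a : EReal)) '' alphaSet K p)

theorem stmt0 (K : E2 → ℝ) (hmeas : Measurable K) (hK : ∀ x, K x ≤ 0)
    (hloc : ∀ R : ℝ, ∃ M : ℝ, ∀ x : E2, ‖x‖ ≤ R → |K x| ≤ M)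
    (p p₀ : ℝ) (hp : 1 ≤ p) (hpp₀ : p < p₀) :
    alphaP K p₀ ≤ alphaP K p := by
  have hp0 : 0 < p := lt_of_lt_of_le one_pos hp
  have hp₀0 : 0 < p₀ := hp0.trans hpp₀
  have hd : 0 < p₀ - p := sub_pos.2 hpp₀
  set r : ℝ := p₀ / p with hr
  set r' : ℝ := p₀ / (p₀ - p) with hr'
  have hconj : Real.HolderConjugate r r' := by
    rw [Real.holderConjugate_iff]
    constructor
    · rw [hr, lt_div_iff₀ hp0]; linarith
    · rw [hr, hr']; field_simp; ring
  refine sSup_le ?_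
  rintro x ⟨α, hα, rfl⟩
  have key : ∀ β : ℝ, β < α → β ∈ alphaSet K p := by
    intro β hβ
    simp only [alphaSet, Set.mem_setOf_eq] at hα ⊢
    set s : ℝ := p / p₀ * (2*α*p₀ + 2*(p₀-1)) with hs
    set t : ℝ := 2*β*p + 2*(p-1) - s with ht
    have htr' : t * r' = -(2*(α-β)*p*p₀/(p₀-p)) - 2 := by
      rw [ht, hs, hr']; field_simp; ring
    have hτ : (2 : ℝ) < -(t * r') := by
      rw [htr']
      have hpos : 0 < 2*(α-β)*p*p₀/(p₀-p) :=
        div_pos (mul_pos (mul_pos (mul_pos two_pos (sub_pos.2 hβ)) hp0) hp₀0) hd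
      linarith
    -- the dominating function
    have hg : Integrable (fun x : E2 =>
        |K x| ^ p₀ * (1 + ‖x‖) ^ (2*α*p₀ + 2*(p₀-1)) + (1 + ‖x‖) ^ (t * r')) := by
      refine hα.add ?_
      have h2 : ((Module.finrank ℝ E2 : ℝ)) < -(t * r') := by
        simpa using hτ
      have := integrable_one_add_norm (E := E2) (μ := volume) h2
      simpa using this
    refine hg.mono' ?_ (ae_of_all _ ?_)
    · apply Measurable.aestronglyMeasurable
      exact (hmeas.abs.pow_const p).mul
        ((measurable_norm.const_add 1).pow_const _)
    · intro x
      have h1x : (0:ℝ) < 1 + ‖x‖ := by positivity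
      have hst : s + t = 2*β*p + 2*(p-1) := by rw [ht]; ring
      have habs : (|K x| ^ p * (1 + ‖x‖) ^ s) * (1 + ‖x‖) ^ t =
          |K x| ^ p * (1 + ‖x‖) ^ (2*β*p + 2*(p-1)) := by
        rw [mul_assoc, ← Real.rpow_add h1x, hst]
      have hnn : 0 ≤ |K x| ^ p * (1 + ‖x‖) ^ (2*β*p + 2*(p-1)) := by positivity
      rw [Real.norm_of_nonneg hnn, ← habs]
      have hyoung := Real.young_inequality_of_nonneg
        (a := |K x| ^ p * (1 + ‖x‖) ^ s) (b := (1 + ‖x‖) ^ t)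
        (by positivity) (by positivity) hconj
      refine hyoung.trans ?_
      have e1 : (|K x| ^ p * (1 + ‖x‖) ^ s) ^ r =
          |K x| ^ p₀ * (1 + ‖x‖) ^ (2*α*p₀ + 2*(p₀-1)) := by
        rw [Real.mul_rpow (by positivity) (by positivity)]
        rw [← Real.rpow_mul (abs_nonneg _), ← Real.rpow_mul (le_of_lt h1x)]
        congr 1
        · congr 1; rw [hr]; field_simp
        · congr 1; rw [hs, hr]; field_simp
      have e2 : ((1 + ‖x‖) ^ t) ^ r' = (1 + ‖x‖) ^ (t * r') := by
        rw [← Real.rpow_mul (le_of_lt h1x)]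
      rw [e1, e2]
      have h1r : 1 ≤ r := le_of_lt hconj.lt
      have h1r' : 1 ≤ r' := le_of_lt hconj.symm.lt
      have a1 : |K x| ^ p₀ * (1 + ‖x‖) ^ (2*α*p₀ + 2*(p₀-1)) / r ≤
          |K x| ^ p₀ * (1 + ‖x‖) ^ (2*α*p₀ + 2*(p₀-1)) := by
        apply div_le_self (by positivity) h1r
      have a2 : (1 + ‖x‖) ^ (t * r') / r' ≤ (1 + ‖x‖) ^ (t * r') := by
        apply div_le_self (by positivity) h1r'
      linarith
  by_contra h
  push_neg at h
  obtain ⟨β, h1, h2⟩ := EReal.exists_between_coe_real h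
  have hβ : β ∈ alphaSet K p := key β (by exact_mod_cast h2)
  have : (β : EReal) ≤ alphaP K p := le_sSup ⟨β, hβ, rfl⟩
  exact absurd (this.trans_lt h1) (lt_irrefl _)
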